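/- In the block construction, for every x ∈ T the abundance of x satisfies 1/2 ≤ γ_x ≤ 1. -/

import Mathlib

open Finset

/-- A family of finite sets is union-closed if it contains the union of any two of
its members. -/
def UnionClosed {α : Type*} [DecidableEq α] (F : Finset (Finset α)) : Prop :=
  ∀ A ∈ F, ∀ B ∈ F, A ∪ B ∈ F

/-- The abundance of `x` with respect to a family `F`. -/
noncomputable def abundance {α : Type*} [DecidableEq α] (F : Finset (Finset α)) (x : α) : ℝ :=
  ((F.filter (fun A => x ∈ A)).card : ℝ) / (F.card : ℝ)

/-- The average overlap density of `F`. -/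
noncomputable def AOD {α : Type*} [DecidableEq α] (F : Finset (Finset α)) : ℝ :=
  (1 / (((F.erase ∅).card : ℝ))) *
    ∑ A ∈ F.erase ∅, (1 / (A.card : ℝ)) * ∑ x ∈ A, abundance F x

/-- The union-closed family generated by `G = {B i ∪ {j} : i, j ∈ T}`:
all unions of nonempty subcollections of `G`. -/
def blockFamily {n m : ℕ} (B : Fin m → Finset (Fin n)) (T : Finset (Fin n)) :
    Finset (Finset (Fin n)) :=
  ((((univ : Finset (Fin m)) ×ˢ T).image (fun p => B p.1 ∪ {p.2})).powerset.filter
      (fun C => C.Nonempty)).image (fun C => C.sup id)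

/-- In the block construction, for every `x ∈ T` the abundance of `x`
satisfies `1/2 ≤ γ_x ≤ 1`. -/
theorem blockFamily_abundance_in_T
    (k m s : ℕ) (hk : 0 < k) (hm : 2 ≤ m) (hs : 0 < s) (hsk : s + 2 ≤ k)
    (B : Fin m → Finset (Fin (k * m)))
    (hBcard : ∀ i, (B i).card = k)
    (hBdisj : ∀ i j : Fin m, i ≠ j → Disjoint (B i) (B j))
    (hBcover : (Finset.univ : Finset (Fin m)).biUnion B = (Finset.univ : Finset (Fin (k * m))))
    (T : Fin m → Finset (Fin (k * m)))
    (hT : ∀ i, T i ⊆ B i) (hTcard : ∀ i, (T i).card = s)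
    :
    ∀ x ∈ (univ : Finset (Fin m)).biUnion T,
      1 / 2 ≤ abundance (blockFamily B ((univ : Finset (Fin m)).biUnion T)) x ∧
      abundance (blockFamily B ((univ : Finset (Fin m)).biUnion T)) x ≤ 1 := by

  intro x hx
  set T' := (univ : Finset (Fin m)).biUnion T with hT'
  set F := blockFamily B T' with hF
  -- every member of F can be augmented by x
  have hins : ∀ A ∈ F, insert x A ∈ F := by
    intro A hA
    obtain ⟨C, hC, hCA⟩ := Finset.mem_image.mp hA
    rw [Finset.mem_filter, Finset.mem_powerset] at hC
    obtain ⟨hCsub, hCne⟩ := hC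
    obtain ⟨g, hg⟩ := hCne
    obtain ⟨p, hp, hpg⟩ := Finset.mem_image.mp (hCsub hg)
    refine Finset.mem_image.mpr ⟨insert (B p.1 ∪ {x}) C, ?_, ?_⟩
    · rw [Finset.mem_filter, Finset.mem_powerset]
      refine ⟨Finset.insert_subset ?_ hCsub, ⟨_, Finset.mem_insert_self _ _⟩⟩
      exact Finset.mem_image.mpr ⟨(p.1, x), by simp [hx], rfl⟩
    · have hBsub : B p.1 ⊆ A := by
        rw [← hCA]
        refine subset_trans (subset_trans Finset.subset_union_left (le_of_eq hpg)) ?_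
        exact Finset.le_sup (f := id) hg
      rw [Finset.sup_insert, hCA]
      ext y
      simp only [id, Finset.mem_union, Finset.mem_insert, Finset.sup_eq_union,
        Finset.mem_singleton]
      have := @hBsub y
      tauto
  -- F is nonempty
  have hmpos : 0 < m := lt_of_lt_of_le two_pos hm
  have hFne : F.Nonempty := by
    refine ⟨B ⟨0, hmpos⟩ ∪ {x}, Finset.mem_image.mpr ⟨{B ⟨0, hmpos⟩ ∪ {x}}, ?_, by simp⟩⟩
    rw [Finset.mem_filter, Finset.mem_powerset]
    refine ⟨Finset.singleton_subset_iff.mpr ?_, Finset.singleton_nonempty _⟩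
    exact Finset.mem_image.mpr ⟨(⟨0, hmpos⟩, x), by simp [hx], rfl⟩
  have hNpos : 0 < F.card := Finset.card_pos.mpr hFne
  -- injection argument
  have hcard : (F.filter (fun A => x ∉ A)).card ≤ (F.filter (fun A => x ∈ A)).card := by
    apply Finset.card_le_card_of_injOn (fun A => insert x A)
    · intro A hA
      rw [Finset.mem_coe, Finset.mem_filter] at hA ⊢
      exact ⟨hins A hA.1, Finset.mem_insert_self _ _⟩
    · intro A hA A' hA' h
      simp only [Finset.coe_filter, Set.mem_setOf_eq] at hA hA'
      have := congrArg (fun S => Finset.erase S x) h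
      simpa [Finset.erase_insert hA.2, Finset.erase_insert hA'.2] using this
  have hsplit : (F.filter (fun A => x ∈ A)).card + (F.filter (fun A => x ∉ A)).card = F.card :=
    Finset.card_filter_add_card_filter_not (fun A => x ∈ A)
  have hle : (F.filter (fun A => x ∈ A)).card ≤ F.card :=
    Finset.card_le_card (Finset.filter_subset _ _)
  constructor
  · rw [abundance, div_le_div_iff₀ (by norm_num) (by exact_mod_cast hNpos)]
    have h2 : F.card ≤ 2 * (F.filter (fun A => x ∈ A)).card := by omega
    push_cast
    have := (Nat.cast_le (α := ℝ)).mpr h2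
    push_cast at this
    linarith
  · rw [abundance, div_le_one (by exact_mod_cast hNpos)]
    exact_mod_cast hle
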